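/- If a tuple (x₁,…,x_m) of points of a compact set Γ ⊆ ℝⁿ maximizes the m-dimensional volume vol_m among all m-tuples of points of Γ, with vol_m(x₁,…,x_m) > 0, and x_{m+1} ∈ Γ satisfies dist(x_{m+1}, span(x₁,…,x_m)) ≥ δ, then MinHeight(x₁,…,x_{m+1}) ≥ δ. -/

import Mathlib

open scoped RealInnerProductSpace
open MeasureTheory
open Matrix ENNReal

noncomputable section

abbrev E (n : ℕ) := EuclideanSpace ℝ (Fin n)

def wedge {n : ℕ} (v w : E n) : Matrix (Fin n) (Fin n) ℝ :=
  Matrix.of fun i j => v i * w j - w i * v j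

def innerL {n : ℕ} (A B : Matrix (Fin n) (Fin n) ℝ) : ℝ :=
  (1 / 2) * ∑ i, ∑ j, A i j * B i j

def normL {n : ℕ} (A : Matrix (Fin n) (Fin n) ℝ) : ℝ := Real.sqrt (innerL A A)

def minHeight {n k : ℕ} (a : Fin k → E n) : ℝ :=
  ⨅ j, Metric.infDist (a j) (↑(Submodule.span ℝ (a '' {i | i ≠ j})) : Set (E n))

/-- `vol k (a₁,…,a_k)`: the `k`-dimensional Hausdorff measure of the parallelotope
generated by the vectors `a₁,…,a_k`. -/
def vol {n : ℕ} (k : ℕ) (a : Fin k → E n) : ENNReal :=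
  μH[(k : ℝ)] {x : E n | ∃ lam : Fin k → ℝ,
    (∀ i, lam i ∈ Set.Icc (0:ℝ) 1) ∧ x = ∑ i, lam i • a i}

def Bmat {n k : ℕ} (a : Fin k → E n) : Matrix (Fin n) (Fin k) ℝ :=
  Matrix.of fun l i => a i l

def gram {n k : ℕ} (a : Fin k → E n) : Matrix (Fin k) (Fin k) ℝ :=
  (Bmat a)ᴴ * Bmat a

lemma gram_apply {n k : ℕ} (a : Fin k → E n) (i j : Fin k) :
    gram a i j = ⟪a i, a j⟫ := by
  simp [_root_.gram, Matrix.mul_apply, Bmat, PiLp.inner_apply, RCLike.inner_apply,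
    Matrix.conjTranspose_apply, mul_comm]

lemma gram_posSemidef {n k : ℕ} (a : Fin k → E n) : (gram a).PosSemidef :=
  Matrix.posSemidef_conjTranspose_mul_self _

lemma gram_det_nonneg {n k : ℕ} (a : Fin k → E n) : 0 ≤ (gram a).det := by
  exact (gram_posSemidef a).det_nonneg

lemma gram_mulVec {n k : ℕ} (a : Fin k → E n) (c : Fin k → ℝ) (i : Fin k) :
    (gram a).mulVec c i = ⟪a i, ∑ j, c j • a j⟫ := by
  simp only [Matrix.mulVec, dotProduct, _root_.gram_apply, inner_sum, real_inner_smul_right,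
    PiLp.inner_apply, RCLike.inner_apply, starRingEnd_apply, star_trivial]
  simp [Finset.mul_sum, mul_comm, mul_left_comm]

lemma gram_comp_equiv {n k : ℕ} (a : Fin k → E n) (σ : Fin k ≃ Fin k) :
    (gram (a ∘ σ)).det = (gram a).det := by
  have : gram (a ∘ σ) = (gram a).submatrix σ σ := by
    ext i j; simp [gram_apply]
  rw [this, Matrix.det_submatrix_equiv_self]

lemma Bmat_mulVec {n k : ℕ} (a : Fin k → E n) (c : Fin k → ℝ) :
    (Bmat a).mulVec c = fun l => (∑ j, c j • a j) l := by
  ext l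
  simp [Matrix.mulVec, dotProduct, Bmat, mul_comm]

lemma gram_det_eq_zero {n k : ℕ} {a : Fin k → E n} (h : ¬ LinearIndependent ℝ a) :
    (gram a).det = 0 := by
  rw [← Matrix.exists_mulVec_eq_zero_iff]
  obtain ⟨g, hsum, i, hgi⟩ := Fintype.not_linearIndependent_iff.mp h
  refine ⟨g, fun hg => hgi (congrFun hg i), ?_⟩
  have hB : (Bmat a).mulVec g = 0 := by
    rw [Bmat_mulVec, hsum]; rfl
  show (gram a).mulVec g = 0
  rw [_root_.gram, ← Matrix.mulVec_mulVec, hB, Matrix.mulVec_zero]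

lemma gram_det_ne_zero {n k : ℕ} {a : Fin k → E n} (h : LinearIndependent ℝ a) :
    (gram a).det ≠ 0 := by
  rw [Ne, ← Matrix.exists_mulVec_eq_zero_iff]
  rintro ⟨c, hc, hc0⟩
  apply hc
  have hinner : ∀ i, ⟪a i, ∑ j, c j • a j⟫ = 0 := by
    intro i
    rw [← gram_mulVec, hc0]
    rfl
  have h2 : ⟪∑ j, c j • a j, ∑ j, c j • a j⟫ = (0:ℝ) := by
    rw [sum_inner]
    refine Finset.sum_eq_zero fun j _ => ?_
    rw [real_inner_smul_left, hinner, mul_zero]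
  have hs : ∑ j, c j • a j = 0 := by
    rwa [inner_self_eq_zero] at h2
  have := linearIndependent_iff'.mp h Finset.univ c (by simpa using hs)
  ext i; exact this i (Finset.mem_univ i)

lemma infDist_submodule {n : ℕ} (K : Submodule ℝ (E n)) (w : E n) :
    Metric.infDist w (K : Set (E n)) = ‖w - (K.orthogonalProjectionOnto w : E n)‖ := by
  rw [← Submodule.starProjection_apply, Submodule.starProjection_minimal, Metric.infDist_eq_iInf]
  exact iInf_congr fun y => dist_eq_norm _ _

lemma snoc_not_li {n k : ℕ} {v : Fin k → E n} (h : ¬ LinearIndependent ℝ v) (w : E n) :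
    ¬ LinearIndependent ℝ (Fin.snoc v w : Fin (k+1) → E n) := by
  intro hs
  apply h
  have := hs.comp Fin.castSucc (Fin.castSucc_injective k)
  simpa [Fin.snoc_castSucc] using this

lemma gram_det_snoc {n k : ℕ} (v : Fin k → E n) (w : E n) :
    (gram (Fin.snoc v w)).det
      = (gram v).det * (Metric.infDist w (↑(Submodule.span ℝ (Set.range v)) : Set (E n)))^2 := by
  classical
  set K := Submodule.span ℝ (Set.range v) with hK
  by_cases hli : LinearIndependent ℝ v
  swap
  · rw [gram_det_eq_zero (snoc_not_li hli w), gram_det_eq_zero hli, zero_mul]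
  set p : E n := (K.orthogonalProjectionOnto w : E n) with hp
  set u : E n := w - p with hu
  have hpK : p ∈ K := (K.orthogonalProjectionOnto w).2
  have huK : u ∈ Kᗮ := K.sub_starProjection_mem_orthogonal w
  have hvu : ∀ i, ⟪v i, u⟫ = 0 := fun i =>
    Submodule.inner_right_of_mem_orthogonal (Submodule.subset_span (Set.mem_range_self i)) huK
  have hpu : ⟪p, u⟫ = 0 := Submodule.inner_right_of_mem_orthogonal hpK huK
  have hw : w = p + u := by rw [hu]; abel
  obtain ⟨c, hc⟩ := Submodule.mem_span_range_iff_exists_fun ℝ |>.mp hpK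
  set q : Fin k → ℝ := fun i => ⟪v i, p⟫ with hq
  have hGc : (gram v).mulVec c = q := by
    ext i; rw [gram_mulVec, hc]
  set G := gram v with hG
  have hGdet : IsUnit G.det := (gram_det_ne_zero hli).isUnit
  have hinv : Invertible G := G.invertibleOfIsUnitDet hGdet
  set Bc : Matrix (Fin k) (Fin 1) ℝ := Matrix.of fun i _ => q i with hBc
  set Cc : Matrix (Fin 1) (Fin k) ℝ := Matrix.of fun _ j => q j with hCc
  set Dc : Matrix (Fin 1) (Fin 1) ℝ := Matrix.of fun _ _ => ⟪p,p⟫ + ⟪u,u⟫ with hDc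
  have hvw : ∀ i, ⟪v i, w⟫ = q i := by
    intro i; rw [hw, inner_add_right, hvu, add_zero]
  have hup : ⟪u, p⟫ = 0 := by rw [real_inner_comm]; exact hpu
  have hww : ⟪w, w⟫ = ⟪p,p⟫ + ⟪u,u⟫ := by
    rw [hw, inner_add_right, inner_add_left, inner_add_left, hpu, hup]
    ring
  have hmat : gram (Fin.snoc v w) =
      (Matrix.fromBlocks G Bc Cc Dc).submatrix finSumFinEquiv.symm finSumFinEquiv.symm := by
    ext i j
    rw [gram_apply, Matrix.submatrix_apply]
    refine Fin.lastCases ?_ (fun i' => ?_) i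
    · refine Fin.lastCases ?_ (fun j' => ?_) j
      · rw [finSumFinEquiv_symm_last]
        simp only [Fin.snoc_last, Matrix.fromBlocks_apply₂₂, hDc, Matrix.of_apply]
        exact hww
      · have hj : finSumFinEquiv.symm (Fin.castSucc j') = Sum.inl j' :=
          finSumFinEquiv_symm_apply_castAdd j'
        rw [finSumFinEquiv_symm_last, hj]
        simp only [Fin.snoc_last, Fin.snoc_castSucc, Matrix.fromBlocks_apply₂₁, hCc,
          Matrix.of_apply]
        rw [real_inner_comm]
        exact hvw j'
    · have hi : finSumFinEquiv.symm (Fin.castSucc i') = Sum.inl i' :=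
        finSumFinEquiv_symm_apply_castAdd i'
      refine Fin.lastCases ?_ (fun j' => ?_) j
      · rw [finSumFinEquiv_symm_last, hi]
        simp only [Fin.snoc_last, Fin.snoc_castSucc, Matrix.fromBlocks_apply₁₂, hBc,
          Matrix.of_apply]
        exact hvw i'
      · have hj : finSumFinEquiv.symm (Fin.castSucc j') = Sum.inl j' :=
          finSumFinEquiv_symm_apply_castAdd j'
        rw [hi, hj]
        simp only [Fin.snoc_castSucc, Matrix.fromBlocks_apply₁₁, hG]
        exact (gram_apply v i' j').symm
  have hdet : (gram (Fin.snoc v w)).det = G.det * (Dc - Cc * G⁻¹ * Bc).det := by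
    rw [hmat, Matrix.det_submatrix_equiv_self, Matrix.det_fromBlocks₁₁,
      Matrix.invOf_eq_nonsing_inv]
  have hCGB : (Cc * G⁻¹ * Bc) 0 0 = ⟪p, p⟫ := by
    have hinvq : G⁻¹.mulVec q = c := by
      rw [← hGc, Matrix.mulVec_mulVec, Matrix.nonsing_inv_mul G hGdet, Matrix.one_mulVec]
    have : (Cc * G⁻¹ * Bc) 0 0 = ∑ i, q i * (G⁻¹.mulVec q) i := by
      rw [Matrix.mul_assoc, Matrix.mul_apply]
      refine Finset.sum_congr rfl fun i _ => ?_
      rw [Matrix.mul_apply]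
      simp [hBc, hCc, Matrix.mulVec, dotProduct, Finset.mul_sum]
    have hpp : ⟪p, p⟫ = ∑ i, q i * c i :=
      calc ⟪p, p⟫ = ⟪∑ i, c i • v i, p⟫ := by rw [hc]
        _ = ∑ i, c i * ⟪v i, p⟫ := by
            rw [sum_inner]
            exact Finset.sum_congr rfl fun i _ => real_inner_smul_left _ _ _
        _ = ∑ i, q i * c i := Finset.sum_congr rfl fun i _ => mul_comm _ _
    rw [this, hinvq]
    exact hpp.symm
  have hDsub : (Dc - Cc * G⁻¹ * Bc).det = ⟪u, u⟫ := by
    rw [Matrix.det_fin_one, Matrix.sub_apply, hCGB]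
    simp [hDc]
  rw [hdet, hDsub]
  congr 1
  rw [infDist_submodule, ← hp, ← hu, real_inner_self_eq_norm_sq]

lemma euclid_haar (k : ℕ) : ∃ c : ℝ≥0∞, c ≠ 0 ∧ c ≠ ⊤ ∧
    (μH[(k : ℝ)] : Measure (EuclideanSpace ℝ (Fin k))) = c • volume := by
  have h1 : (μH[(k : ℝ)] : Measure (EuclideanSpace ℝ (Fin k))).IsAddHaarMeasure := by
    have := MeasureTheory.isAddHaarMeasure_hausdorffMeasure (E := EuclideanSpace ℝ (Fin k))
    rwa [finrank_euclideanSpace_fin] at this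
  haveI := h1
  have heq := MeasureTheory.Measure.isAddLeftInvariant_eq_smul
    (μH[(k : ℝ)] : Measure (EuclideanSpace ℝ (Fin k))) volume
  set c₀ := MeasureTheory.Measure.addHaarScalarFactor
    (μH[(k : ℝ)] : Measure (EuclideanSpace ℝ (Fin k))) volume with hc₀
  refine ⟨(c₀ : ℝ≥0∞), ?_, ENNReal.coe_ne_top, by rw [heq, ENNReal.smul_def]⟩
  intro hc
  have hc0 : c₀ = 0 := by exact_mod_cast hc
  rw [hc0, zero_smul] at heq
  have : (μH[(k : ℝ)] : Measure (EuclideanSpace ℝ (Fin k))) Set.univ ≠ 0 := by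
    refine (isOpen_univ.measure_pos _ ⟨0, trivial⟩).ne'
  rw [heq] at this
  simp at this

def cube (k : ℕ) : Set (EuclideanSpace ℝ (Fin k)) := {x | ∀ i, x i ∈ Set.Icc (0:ℝ) 1}

lemma cube_volume (k : ℕ) : volume (cube k) = 1 := by
  have hmp := EuclideanSpace.volume_preserving_symm_measurableEquiv_toLp (Fin k)
  have : cube k = (MeasurableEquiv.toLp 2 (Fin k → ℝ)).symm ⁻¹'
      (Set.univ.pi fun _ : Fin k => Set.Icc (0:ℝ) 1) := by
    ext x
    simp [cube, Set.mem_pi, Pi.le_def, forall_and]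
  rw [this, hmp.measure_preimage
    ((MeasurableSet.univ_pi fun _ => measurableSet_Icc).nullMeasurableSet)]
  rw [volume_pi_pi]
  simp

def Tmap {n k : ℕ} (a : Fin k → E n) : EuclideanSpace ℝ (Fin k) →ₗ[ℝ] E n where
  toFun x := ∑ i, x i • a i
  map_add' x y := by
    simp [add_smul, Finset.sum_add_distrib]
  map_smul' r x := by
    simp [smul_smul, Finset.smul_sum]

lemma Tmap_single {n k : ℕ} (a : Fin k → E n) (i : Fin k) :
    Tmap a (EuclideanSpace.single i 1) = a i := by
  simp [Tmap, EuclideanSpace.single_apply]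

lemma parallelotope_eq {n k : ℕ} (a : Fin k → E n) :
    {x : E n | ∃ lam : Fin k → ℝ,
      (∀ i, lam i ∈ Set.Icc (0:ℝ) 1) ∧ x = ∑ i, lam i • a i} = Tmap a '' cube k := by
  ext x
  constructor
  · rintro ⟨lam, hlam, rfl⟩
    exact ⟨WithLp.toLp 2 lam, hlam, rfl⟩
  · rintro ⟨y, hy, rfl⟩
    exact ⟨y.ofLp, hy, rfl⟩

lemma vol_eq_gram {n : ℕ} (k : ℕ) : ∃ c : ℝ≥0∞, c ≠ 0 ∧ c ≠ ⊤ ∧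
    ∀ a : Fin k → E n, vol k a = c * ENNReal.ofReal (Real.sqrt (gram a).det) := by
  obtain ⟨c, hc0, hctop, hch⟩ := euclid_haar k
  refine ⟨c, hc0, hctop, fun a => ?_⟩
  by_cases hli : LinearIndependent ℝ a
  · set V := Submodule.span ℝ (Set.range a) with hV
    have hmem : ∀ x, Tmap a x ∈ V := by
      intro x
      show ∑ i, x i • a i ∈ V
      exact Submodule.sum_mem _ fun i _ =>
        Submodule.smul_mem _ _ (Submodule.subset_span (Set.mem_range_self i))
    have hdim : Module.finrank ℝ V = k := by
      have := finrank_span_eq_card hli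
      simpa [hV] using this
    let o : OrthonormalBasis (Fin k) ℝ V :=
      (stdOrthonormalBasis ℝ V).reindex (finCongr hdim)
    let T' : EuclideanSpace ℝ (Fin k) →ₗ[ℝ] V := (Tmap a).codRestrict V hmem
    let M : EuclideanSpace ℝ (Fin k) →ₗ[ℝ] EuclideanSpace ℝ (Fin k) :=
      (o.repr.toLinearEquiv.toLinearMap).comp T'
    -- image chain
    have h1 : Tmap a '' cube k = ((↑) : V → E n) '' (T' '' cube k) := by
      rw [Set.image_image]; rfl
    have h2 : μH[(k : ℝ)] (Tmap a '' cube k) = μH[(k : ℝ)] (T' '' cube k) := by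
      rw [h1]
      exact (isometry_subtype_coe).hausdorffMeasure_image (Or.inl (by positivity)) _
    have h3 : μH[(k : ℝ)] (T' '' cube k) = μH[(k : ℝ)] (M '' cube k) := by
      have : M '' cube k = ⇑o.repr '' (T' '' cube k) := by
        rw [Set.image_image]; rfl
      rw [this]
      exact (o.repr.isometry.hausdorffMeasure_image (Or.inl (by positivity)) _).symm
    have h4 : μH[(k : ℝ)] (M '' cube k) = c * volume (M '' cube k) := by
      rw [hch]; rfl
    have h5 : volume (M '' cube k) = ENNReal.ofReal |LinearMap.det M| * volume (cube k) :=
      MeasureTheory.Measure.addHaar_image_linearMap volume M (cube k)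
    -- determinant computation
    let bE := (EuclideanSpace.basisFun (Fin k) ℝ).toBasis
    let A := LinearMap.toMatrix bE bE M
    have hA : ∀ l i, A l i = (M (EuclideanSpace.single i 1)) l := by
      intro l i
      show (LinearMap.toMatrix bE bE) M l i = _
      rw [LinearMap.toMatrix_apply]
      simp [bE, EuclideanSpace.basisFun_apply, OrthonormalBasis.coe_toBasis_repr_apply,
        EuclideanSpace.basisFun_repr]
    have hAA : Aᵀ * A = gram a := by
      ext i j
      rw [Matrix.mul_apply, gram_apply]
      have : ∀ l, Aᵀ i l * A l j
          = (M (EuclideanSpace.single i 1)) l * (M (EuclideanSpace.single j 1)) l := by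
        intro l
        rw [Matrix.transpose_apply, hA, hA]
      rw [Finset.sum_congr rfl fun l _ => this l]
      have hMM : ∀ x y, ⟪M x, M y⟫ = ⟪Tmap a x, Tmap a y⟫ := by
        intro x y
        have : ∀ z, M z = o.repr (T' z) := fun z => rfl
        rw [this, this, LinearIsometryEquiv.inner_map_map, Submodule.coe_inner]
        rfl
      have := hMM (EuclideanSpace.single i 1) (EuclideanSpace.single j 1)
      rw [Tmap_single, Tmap_single] at this
      rw [← this, PiLp.inner_apply]
      simp [RCLike.inner_apply, mul_comm]
    have hdet2 : (gram a).det = (LinearMap.det M)^2 := by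
      have : LinearMap.det M = A.det := by rw [← LinearMap.det_toMatrix bE M]
      rw [← hAA, Matrix.det_mul, Matrix.det_transpose, this]
      ring
    have hsq : Real.sqrt (gram a).det = |LinearMap.det M| := by
      rw [hdet2, Real.sqrt_sq_eq_abs]
    rw [vol, parallelotope_eq, h2, h3, h4, h5, cube_volume, mul_one, hsq]
  · rw [gram_det_eq_zero hli, Real.sqrt_zero, ENNReal.ofReal_zero, mul_zero]
    set V := Submodule.span ℝ (Set.range a) with hV
    have hsub : Tmap a '' cube k ⊆ (V : Set (E n)) := by
      rintro x ⟨y, _, rfl⟩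
      show ∑ i, y i • a i ∈ V
      exact Submodule.sum_mem _ fun i _ =>
        Submodule.smul_mem _ _ (Submodule.subset_span (Set.mem_range_self i))
    have hlt : Module.finrank ℝ V < k := by
      rcases lt_or_eq_of_le (finrank_range_le_card (R := ℝ) a) with h | h
      · simpa [Set.finrank, hV] using h
      · exact absurd (linearIndependent_iff_card_eq_finrank_span.mpr (by
          simpa using h.symm)) hli
    have hV0 : μH[(k : ℝ)] (V : Set (E n)) = 0 := by
      have hiso : Isometry ((↑) : V → E n) := isometry_subtype_coe
      have himg : (V : Set (E n)) = ((↑) : V → E n) '' Set.univ := by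
        simp
      rw [himg, hiso.hausdorffMeasure_image (Or.inl (by positivity))]
      have : (μH[(k : ℝ)] : Measure V) = 0 :=
        Real.hausdorffMeasure_of_finrank_lt (by exact_mod_cast hlt)
      rw [this]; rfl
    rw [vol, parallelotope_eq]
    exact le_antisymm (hV0 ▸ measure_mono hsub) (zero_le)

lemma snoc_image_ne_last {n m : ℕ} (a : Fin m → E n) (b : E n) :
    (Fin.snoc a b : Fin (m+1) → E n) '' {i | i ≠ Fin.last m} = Set.range a := by
  ext x
  constructor
  · rintro ⟨j, hj, rfl⟩
    obtain ⟨i, rfl⟩ := Fin.exists_castSucc_eq.mpr hj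
    exact ⟨i, by simp⟩
  · rintro ⟨i, rfl⟩
    exact ⟨Fin.castSucc i, (Fin.castSucc_lt_last i).ne, by simp⟩

lemma snoc_image_ne_castSucc {n m : ℕ} (a : Fin m → E n) (b : E n) (i₀ : Fin m) :
    (Fin.snoc a b : Fin (m+1) → E n) '' {i | i ≠ Fin.castSucc i₀}
      = Set.range (Function.update a i₀ b) := by
  ext x
  constructor
  · rintro ⟨j, hj, rfl⟩
    rcases eq_or_ne j (Fin.last m) with rfl | hjl
    · exact ⟨i₀, by simp [Fin.snoc_last]⟩
    · obtain ⟨i, rfl⟩ := Fin.exists_castSucc_eq.mpr hjl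
      have hii : i ≠ i₀ := fun h => hj (by rw [h])
      exact ⟨i, by simp [Function.update_of_ne hii, Fin.snoc_castSucc]⟩
  · rintro ⟨i, rfl⟩
    rcases eq_or_ne i i₀ with rfl | hii
    · exact ⟨Fin.last m, (Fin.castSucc_lt_last i).ne', by simp [Fin.snoc_last]⟩
    · exact ⟨Fin.castSucc i, by simpa [Fin.castSucc_injective m |>.ne_iff] using hii,
        by simp [Fin.snoc_castSucc, Function.update_of_ne hii]⟩

lemma snoc_update_perm {n m : ℕ} (a : Fin m → E n) (b : E n) (i₀ : Fin m) :
    (Fin.snoc (Function.update a i₀ b) (a i₀) : Fin (m+1) → E n)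
      = (Fin.snoc a b : Fin (m+1) → E n) ∘ (Equiv.swap (Fin.castSucc i₀) (Fin.last m)) := by
  funext j
  rcases eq_or_ne j (Fin.last m) with rfl | hjl
  · simp [Fin.snoc_last, Equiv.swap_apply_right, Fin.snoc_castSucc]
  · obtain ⟨i, rfl⟩ := Fin.exists_castSucc_eq.mpr hjl
    rcases eq_or_ne i i₀ with rfl | hii
    · simp [Fin.snoc_castSucc, Equiv.swap_apply_left, Fin.snoc_last]
    · have h1 : Fin.castSucc i ≠ Fin.castSucc i₀ := by
        simpa [Fin.castSucc_injective m |>.ne_iff] using hii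
      have h2 : Fin.castSucc i ≠ Fin.last m := (Fin.castSucc_lt_last i).ne
      simp [Fin.snoc_castSucc, Equiv.swap_apply_of_ne_of_ne h1 h2,
        Function.update_of_ne hii]


/-- a volume-maximizing `m`-tuple in `Γ` together with a point of `Γ` at
distance `≥ δ` from its span has minimal height `≥ δ`. -/
theorem stmt_5 (n m : ℕ) (Γ : Set (E n)) (hΓ : IsCompact Γ) (δ : ℝ)
    (a : Fin m → E n) (ha : ∀ j, a j ∈ Γ)
    (hmax : ∀ b : Fin m → E n, (∀ j, b j ∈ Γ) → vol m b ≤ vol m a)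
    (hpos : 0 < vol m a) (b : E n) (hb : b ∈ Γ)
    (hdist : δ ≤ Metric.infDist b (↑(Submodule.span ℝ (Set.range a)) : Set (E n))) :
    δ ≤ minHeight (Fin.snoc a b) := by
  obtain ⟨c, hc0, hctop, hvol⟩ := vol_eq_gram (n := n) m
  set d := Metric.infDist b (↑(Submodule.span ℝ (Set.range a)) : Set (E n)) with hd
  have hd0 : 0 ≤ d := Metric.infDist_nonneg
  have hga : 0 < (gram a).det := by
    rcases (gram_det_nonneg a).eq_or_lt with h | h
    · exfalso
      rw [hvol a, ← h, Real.sqrt_zero, ENNReal.ofReal_zero, mul_zero] at hpos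
      exact lt_irrefl _ hpos
    · exact h
  rw [minHeight]
  refine le_ciInf fun j => ?_
  refine Fin.lastCases ?_ (fun i₀ => ?_) j
  · rw [snoc_image_ne_last, Fin.snoc_last]
    exact hdist
  · set u := Function.update a i₀ b with hu
    have hu_mem : ∀ j, u j ∈ Γ := by
      intro j
      rcases eq_or_ne j i₀ with rfl | hj
      · simpa [hu] using hb
      · simpa [hu, Function.update_of_ne hj] using ha j
    have hgu_le : (gram u).det ≤ (gram a).det := by
      have hle := hmax u hu_mem
      rw [hvol, hvol] at hle
      have h2 := (ENNReal.mul_le_mul_iff_right hc0 hctop).mp hle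
      have h3 : Real.sqrt (gram u).det ≤ Real.sqrt (gram a).det := by
        rwa [ENNReal.ofReal_le_ofReal_iff (Real.sqrt_nonneg _)] at h2
      calc (gram u).det = Real.sqrt (gram u).det ^ 2 :=
            (Real.sq_sqrt (gram_det_nonneg u)).symm
        _ ≤ Real.sqrt (gram a).det ^ 2 := by
            exact pow_le_pow_left₀ (Real.sqrt_nonneg _) h3 2
        _ = (gram a).det := Real.sq_sqrt (gram_det_nonneg a)
    rw [snoc_image_ne_castSucc, Fin.snoc_castSucc]
    set h := Metric.infDist (a i₀) (↑(Submodule.span ℝ (Set.range u)) : Set (E n)) with hh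
    have hh0 : 0 ≤ h := Metric.infDist_nonneg
    have key : (gram u).det * h^2 = (gram a).det * d^2 := by
      rw [← gram_det_snoc u (a i₀), ← gram_det_snoc a b, snoc_update_perm a b i₀,
        gram_comp_equiv]
    rcases (gram_det_nonneg u).eq_or_lt with hgu | hgu
    · have hdz : d = 0 := by
        have : (gram a).det * d^2 = 0 := by rw [← key, ← hgu, zero_mul]
        rcases mul_eq_zero.mp this with h1 | h1
        · exact absurd h1 hga.ne'
        · exact pow_eq_zero_iff (by norm_num) |>.mp h1
      calc δ ≤ d := hdist
        _ = 0 := hdz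
        _ ≤ h := hh0
    · have hsq : d^2 ≤ h^2 := by
        have h1 : (gram u).det * d^2 ≤ (gram u).det * h^2 := by
          rw [key]
          exact mul_le_mul_of_nonneg_right hgu_le (sq_nonneg d)
        exact le_of_mul_le_mul_left h1 hgu
      have : d ≤ h := by
        have := pow_le_pow_iff_left₀ hd0 hh0 (two_ne_zero) |>.mpr
        exact (pow_le_pow_iff_left₀ hd0 hh0 two_ne_zero).mp hsq
      exact hdist.trans this
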